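/- arXiv:2603.28758 — 3 statements merged into one kernel-verified Lean document; each statement's English description precedes it below -/
import Mathlib

section
/- Let (𝒴, d) be a metric space, C ⊆ 𝒴 a nonempty closed set, γ ≥ 0, p ≥ 1 a real number, and ȳ ∈ 𝒴. Then sup_{y ∈ 𝒴} { 1_C(y) − γ·d(y, ȳ)^p } = max(1 − γ·dist(ȳ, C)^p, 0), where 1_C is the indicator function of C and dist(ȳ, C) = inf_{c ∈ C} d(ȳ, c). -/
open MeasureTheory Set

/-- dual inner supremum for the indicator of a closed set. -/
theorem stmt0 {Y : Type*} [MetricSpace Y] (C : Set Y) (hC : C.Nonempty)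
    (hCclosed : IsClosed C) (γ p : ℝ) (hγ : 0 ≤ γ) (hp : 1 ≤ p) (y₀ : Y) :
    (⨆ y : Y, (C.indicator (fun _ => (1 : ℝ)) y - γ * dist y y₀ ^ p))
      = max (1 - γ * Metric.infDist y₀ C ^ p) 0 := by
  have hp0 : 0 < p := lt_of_lt_of_le one_pos hp
  set f : Y → ℝ := fun y => C.indicator (fun _ => (1 : ℝ)) y - γ * dist y y₀ ^ p with hf
  have hfle : ∀ y, f y ≤ 1 := by
    intro y
    have h1 : C.indicator (fun _ => (1 : ℝ)) y ≤ 1 := by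
      by_cases h : y ∈ C <;> simp [h]
    have h2 : 0 ≤ γ * dist y y₀ ^ p :=
      mul_nonneg hγ (Real.rpow_nonneg dist_nonneg p)
    simp only [f]; linarith
  have hbdd : BddAbove (range f) := by
    refine ⟨1, ?_⟩
    rintro _ ⟨y, rfl⟩
    exact hfle y
  have : Nonempty Y := ⟨hC.some⟩
  apply le_antisymm
  · apply ciSup_le
    intro y
    by_cases h : y ∈ C
    · refine le_max_of_le_left ?_
      simp only [f, indicator_of_mem h]
      have hd : Metric.infDist y₀ C ≤ dist y y₀ := by
        rw [dist_comm]; exact Metric.infDist_le_dist_of_mem h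
      have := Real.rpow_le_rpow Metric.infDist_nonneg hd hp0.le
      nlinarith
    · refine le_max_of_le_right ?_
      simp only [f, indicator_of_notMem h]
      have : 0 ≤ γ * dist y y₀ ^ p := mul_nonneg hγ (Real.rpow_nonneg dist_nonneg p)
      linarith
  · apply max_le
    · refine le_of_forall_pos_le_add ?_
      intro ε hε
      have hcont : ContinuousAt (fun t : ℝ => γ * t ^ p) (Metric.infDist y₀ C) := by
        exact (continuousAt_const.mul
          (Real.continuousAt_rpow_const _ _ (Or.inr hp0.le)))
      rw [Metric.continuousAt_iff] at hcont
      obtain ⟨δ, hδ, hδ'⟩ := hcont ε hε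
      obtain ⟨y, hyC, hy⟩ := (Metric.infDist_lt_iff hC).mp
        (by linarith : Metric.infDist y₀ C < Metric.infDist y₀ C + δ)
      have hge : Metric.infDist y₀ C ≤ dist y₀ y := Metric.infDist_le_dist_of_mem hyC
      have hdist : dist (dist y₀ y) (Metric.infDist y₀ C) < δ := by
        rw [Real.dist_eq, abs_of_nonneg (by linarith)]; linarith
      have hclose : |γ * dist y₀ y ^ p - γ * Metric.infDist y₀ C ^ p| < ε := by
        have := hδ' hdist
        rwa [Real.dist_eq] at this
      have h1 : γ * dist y₀ y ^ p < γ * Metric.infDist y₀ C ^ p + ε := by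
        have := abs_lt.mp hclose
        linarith [this.2]
      have hfy : f y ≤ ⨆ z, f z := le_ciSup hbdd y
      have : f y = 1 - γ * dist y₀ y ^ p := by
        simp [f, indicator_of_mem hyC, dist_comm]
      linarith
    · have h0 : (0 : ℝ) ≤ f y₀ := by
        have : dist y₀ y₀ = 0 := dist_self y₀
        simp only [f, this, Real.zero_rpow hp0.ne', mul_zero, sub_zero]
        exact indicator_nonneg (fun _ _ => zero_le_one) y₀
      exact h0.trans (le_ciSup hbdd y₀)
end

section
/- Let C ∈ ℝ^{k×n} have orthonormal rows, let S ⊆ ℝ^k be a nonempty closed set, and define the lifted unsafe set 𝒞 = { (x, z) ∈ ℝ^n × ℝ^k : C x − z ∈ S }. Then for every (x, z) ∈ ℝ^n × ℝ^k, the Euclidean distance in ℝ^n × ℝ^k from (x, z) to 𝒞 equals (1/√2)·dist(C x − z, S), where dist(y, S) = inf_{ỹ ∈ S} ‖y − ỹ‖. -/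
open Matrix Pointwise

private lemma sumsq_dot {m : ℕ} (v : Fin m → ℝ) : ∑ i, (v i)^2 = v ⬝ᵥ v := by
  simp [dotProduct, sq]

private lemma key1 {k n : ℕ} (C : Matrix (Fin k) (Fin n) ℝ) (hC : C * Cᵀ = 1) (w : Fin k → ℝ) :
    ∑ i, (Cᵀ.mulVec w i)^2 = ∑ j, (w j)^2 := by
  rw [sumsq_dot, sumsq_dot]
  calc Cᵀ.mulVec w ⬝ᵥ Cᵀ.mulVec w
      = Matrix.vecMul (Cᵀ.mulVec w) Cᵀ ⬝ᵥ w := by rw [Matrix.dotProduct_mulVec]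
    _ = (C *ᵥ (Cᵀ *ᵥ w)) ⬝ᵥ w := by rw [Matrix.vecMul_transpose]
    _ = ((C * Cᵀ) *ᵥ w) ⬝ᵥ w := by rw [Matrix.mulVec_mulVec]
    _ = w ⬝ᵥ w := by rw [hC, Matrix.one_mulVec]

private lemma key2 {k n : ℕ} (C : Matrix (Fin k) (Fin n) ℝ) (hC : C * Cᵀ = 1) (d : Fin n → ℝ) :
    ∑ j, (C.mulVec d j)^2 ≤ ∑ i, (d i)^2 := by
  set u := C.mulVec d with hu
  have h1 : (∑ j, (u j)^2) = ∑ i, (Cᵀ.mulVec u) i * d i := by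
    rw [sumsq_dot]
    calc u ⬝ᵥ C.mulVec d = Matrix.vecMul u C ⬝ᵥ d := by rw [Matrix.dotProduct_mulVec]
      _ = Cᵀ.mulVec u ⬝ᵥ d := by rw [Matrix.mulVec_transpose]
      _ = ∑ i, (Cᵀ.mulVec u) i * d i := rfl
  have h2 := Finset.sum_mul_sq_le_sq_mul_sq Finset.univ (Cᵀ.mulVec u) d
  rw [key1 C hC u] at h2
  rw [← h1] at h2
  rcases eq_or_lt_of_le (Finset.sum_nonneg fun j _ => sq_nonneg (u j)) with h | h
  · rw [← h]; exact Finset.sum_nonneg fun i _ => sq_nonneg (d i)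
  · nlinarith [h2]

private lemma sqrt_half_mul (s : ℝ) (hs : 0 ≤ s) :
    Real.sqrt ((1/2) * s) = (1 / Real.sqrt 2) * Real.sqrt s := by
  rw [Real.sqrt_mul (by norm_num) s]
  congr 1
  rw [show (1/2 : ℝ) = 2⁻¹ by norm_num, Real.sqrt_inv, one_div]

/-- the Euclidean distance in the lifted space `ℝⁿ × ℝᵏ` from `(x, z)`
to the lifted unsafe set `𝒞 = {(x', z') : C x' − z' ∈ S}` equals
`(1/√2) · dist(C x − z, S)`, for a matrix `C` with orthonormal rows. -/
theorem stmt7 (n k : ℕ) (C : Matrix (Fin k) (Fin n) ℝ) (hC : C * Cᵀ = 1)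
    (S : Set (Fin k → ℝ)) (hS : S.Nonempty) (hScl : IsClosed S)
    (x : Fin n → ℝ) (z : Fin k → ℝ) :
    sInf {r : ℝ | ∃ (x' : Fin n → ℝ) (z' : Fin k → ℝ), C.mulVec x' - z' ∈ S ∧
        r = Real.sqrt ((∑ i, (x i - x' i) ^ 2) + ∑ j, (z j - z' j) ^ 2)}
      = (1 / Real.sqrt 2) *
          sInf {r : ℝ | ∃ y ∈ S, r = Real.sqrt (∑ j, ((C.mulVec x - z) j - y j) ^ 2)} := by
  set y₀ : Fin k → ℝ := C.mulVec x - z with hy0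
  set A : Set ℝ := {r : ℝ | ∃ (x' : Fin n → ℝ) (z' : Fin k → ℝ), C.mulVec x' - z' ∈ S ∧
        r = Real.sqrt ((∑ i, (x i - x' i) ^ 2) + ∑ j, (z j - z' j) ^ 2)} with hA
  set B : Set ℝ := {r : ℝ | ∃ y ∈ S, r = Real.sqrt (∑ j, (y₀ j - y j) ^ 2)} with hB
  have hc : (0:ℝ) ≤ 1 / Real.sqrt 2 := by positivity
  have hAbdd : BddBelow A := by
    refine ⟨0, fun r hr => ?_⟩
    obtain ⟨x', z', _, rfl⟩ := hr
    exact Real.sqrt_nonneg _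
  have hBbdd : BddBelow B := by
    refine ⟨0, fun r hr => ?_⟩
    obtain ⟨y, _, rfl⟩ := hr
    exact Real.sqrt_nonneg _
  -- attainment: for each y ∈ S, the scaled distance is achieved in A
  have attain : ∀ y ∈ S,
      (1 / Real.sqrt 2) * Real.sqrt (∑ j, (y₀ j - y j) ^ 2) ∈ A := by
    intro y hy
    set w : Fin k → ℝ := y₀ - y with hw
    refine ⟨x - (1/2 : ℝ) • Cᵀ.mulVec w, z + (1/2 : ℝ) • w, ?_, ?_⟩
    · have hCx' : C.mulVec (x - (1/2 : ℝ) • Cᵀ.mulVec w)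
          = C.mulVec x - (1/2 : ℝ) • w := by
        rw [Matrix.mulVec_sub, Matrix.mulVec_smul, Matrix.mulVec_mulVec, hC,
          Matrix.one_mulVec]
      rw [hCx']
      have : C.mulVec x - (1/2 : ℝ) • w - (z + (1/2 : ℝ) • w) = y₀ - w := by
        rw [hy0]; abel_nf; module
      rw [this, hw]
      simpa using hy
    · have h1 : ∀ i, x i - (x - (1/2 : ℝ) • Cᵀ.mulVec w) i = (1/2) * Cᵀ.mulVec w i := by
        intro i; simp [smul_eq_mul]; try ring
      have h2 : ∀ j, z j - (z + (1/2 : ℝ) • w) j = -((1/2) * w j) := by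
        intro j; simp [smul_eq_mul]; try ring
      have e1 : (∑ i, (x i - (x - (1/2 : ℝ) • Cᵀ.mulVec w) i) ^ 2)
          = (1/4) * ∑ i, (Cᵀ.mulVec w i)^2 := by
        rw [Finset.mul_sum]
        refine Finset.sum_congr rfl fun i _ => ?_
        rw [h1 i]; ring
      have e2 : (∑ j, (z j - (z + (1/2 : ℝ) • w) j) ^ 2) = (1/4) * ∑ j, (w j)^2 := by
        rw [Finset.mul_sum]
        refine Finset.sum_congr rfl fun j _ => ?_
        rw [h2 j]; ring
      rw [e1, e2, key1 C hC w]
      have : (1/4) * (∑ j, (w j)^2) + (1/4) * (∑ j, (w j)^2)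
          = (1/2) * ∑ j, (w j)^2 := by ring
      rw [this, sqrt_half_mul _ (Finset.sum_nonneg fun j _ => sq_nonneg (w j))]
      have hsw : (∑ j, (w j)^2) = ∑ j, (y₀ j - y j)^2 := by
        refine Finset.sum_congr rfl fun j _ => ?_
        rw [hw]; rfl
      rw [hsw]
  have hAne : A.Nonempty := by
    obtain ⟨y, hy⟩ := hS
    exact ⟨_, attain y hy⟩
  have hBne : B.Nonempty := by
    obtain ⟨y, hy⟩ := hS
    exact ⟨_, y, hy, rfl⟩
  apply le_antisymm
  · -- sInf A ≤ c * sInf B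
    have : (1 / Real.sqrt 2) * sInf B = sInf (((1 / Real.sqrt 2) • B : Set ℝ)) := by
      rw [Real.sInf_smul_of_nonneg hc, smul_eq_mul]
    rw [this]
    refine csInf_le_csInf hAbdd (hBne.smul_set) ?_
    rintro r ⟨b, hb, rfl⟩
    obtain ⟨y, hy, rfl⟩ := hb
    simpa [smul_eq_mul] using attain y hy
  · -- c * sInf B ≤ sInf A
    refine le_csInf hAne ?_
    rintro a ⟨x', z', hmem, rfl⟩
    have hbB : Real.sqrt (∑ j, (y₀ j - (C.mulVec x' - z') j) ^ 2) ∈ B :=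
      ⟨_, hmem, rfl⟩
    have h1 : sInf B ≤ Real.sqrt (∑ j, (y₀ j - (C.mulVec x' - z') j) ^ 2) :=
      csInf_le hBbdd hbB
    have h2 : (1 / Real.sqrt 2) * Real.sqrt (∑ j, (y₀ j - (C.mulVec x' - z') j) ^ 2)
        ≤ Real.sqrt ((∑ i, (x i - x' i) ^ 2) + ∑ j, (z j - z' j) ^ 2) := by
      rw [← sqrt_half_mul _ (Finset.sum_nonneg fun j _ => sq_nonneg _)]
      apply Real.sqrt_le_sqrt
      have hwj : ∀ j, y₀ j - (C.mulVec x' - z') j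
          = C.mulVec (fun i => x i - x' i) j - (z j - z' j) := by
        intro j
        have : C.mulVec (fun i => x i - x' i) j = C.mulVec x j - C.mulVec x' j := by
          have : (fun i => x i - x' i) = x - x' := rfl
          rw [this, Matrix.mulVec_sub]; rfl
        rw [this, hy0]
        simp
        ring
      have hsum : (∑ j, (y₀ j - (C.mulVec x' - z') j) ^ 2)
          ≤ 2 * (∑ j, (C.mulVec (fun i => x i - x' i) j)^2) + 2 * ∑ j, (z j - z' j)^2 := by
        rw [Finset.mul_sum, Finset.mul_sum, ← Finset.sum_add_distrib]
        refine Finset.sum_le_sum fun j _ => ?_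
        rw [hwj j]; nlinarith [sq_nonneg (C.mulVec (fun i => x i - x' i) j + (z j - z' j))]
      have hk2 := key2 C hC (fun i => x i - x' i)
      nlinarith [hsum, hk2]
    calc (1 / Real.sqrt 2) * sInf B
        ≤ (1 / Real.sqrt 2) * Real.sqrt (∑ j, (y₀ j - (C.mulVec x' - z') j) ^ 2) :=
          mul_le_mul_of_nonneg_left h1 hc
      _ ≤ _ := h2
end

section
/- Let C ∈ ℝ^{k×n} have orthonormal rows and let r > 0. Define the lifted unsafe set 𝒞 = { (x, z) ∈ ℝ^n × ℝ^k : ‖C x − z‖ ≤ r }. Then for every (x, z), the Euclidean distance from (x, z) to 𝒞 equals (1/√2)·(‖C x − z‖ − r)_+, where (s)_+ = max(s, 0). -/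
open Matrix

lemma nrm_eq {m : ℕ} (v : Fin m → ℝ) :
    Real.sqrt (∑ i, v i ^ 2) = ‖(WithLp.equiv 2 (Fin m → ℝ)).symm v‖ := by
  rw [EuclideanSpace.norm_eq]
  simp [sq_abs]

lemma nrm_add {m : ℕ} (a b : Fin m → ℝ) :
    Real.sqrt (∑ i, (a i + b i) ^ 2) ≤
      Real.sqrt (∑ i, a i ^ 2) + Real.sqrt (∑ i, b i ^ 2) := by
  rw [nrm_eq, nrm_eq, nrm_eq]
  have h := norm_add_le ((WithLp.equiv 2 (Fin m → ℝ)).symm a) ((WithLp.equiv 2 (Fin m → ℝ)).symm b)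
  convert h using 2
  · rfl
  · rfl

lemma cs {m : ℕ} (a b : Fin m → ℝ) :
    a ⬝ᵥ b ≤ Real.sqrt (∑ i, a i ^ 2) * Real.sqrt (∑ i, b i ^ 2) := by
  have h := Finset.sum_mul_sq_le_sq_mul_sq Finset.univ a b
  have h2 : a ⬝ᵥ b ≤ |∑ i, a i * b i| := by
    rw [dotProduct]; exact le_abs_self _
  refine h2.trans ?_
  rw [← Real.sqrt_mul_self (abs_nonneg _), ← Real.sqrt_mul (by positivity)]
  apply Real.sqrt_le_sqrt
  calc |∑ i, a i * b i| * |∑ i, a i * b i| = (∑ i, a i * b i) ^ 2 := by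
        rw [← abs_mul, ← sq, abs_sq]
    _ ≤ _ := h

lemma iso (k n : ℕ) (C : Matrix (Fin k) (Fin n) ℝ) (hC : C * Cᵀ = 1) (v : Fin k → ℝ) :
    ∑ i, (Cᵀ.mulVec v) i ^ 2 = ∑ j, v j ^ 2 := by
  have h1 : ∑ i, (Cᵀ.mulVec v) i ^ 2 = (Cᵀ.mulVec v) ⬝ᵥ (Cᵀ.mulVec v) := by
    simp [dotProduct, sq]
  have h2 : ∑ j, v j ^ 2 = v ⬝ᵥ v := by simp [dotProduct, sq]
  rw [h1, h2]
  rw [Matrix.dotProduct_mulVec, Matrix.vecMul_transpose, Matrix.mulVec_mulVec, hC,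
    Matrix.one_mulVec]

lemma contraction (k n : ℕ) (C : Matrix (Fin k) (Fin n) ℝ) (hC : C * Cᵀ = 1) (u : Fin n → ℝ) :
    Real.sqrt (∑ j, (C.mulVec u) j ^ 2) ≤ Real.sqrt (∑ i, u i ^ 2) := by
  set w := C.mulVec u with hw
  have key : ∑ j, w j ^ 2 = u ⬝ᵥ (Cᵀ.mulVec w) := by
    have : ∑ j, w j ^ 2 = w ⬝ᵥ w := by simp [dotProduct, sq]
    rw [this, hw, Matrix.dotProduct_mulVec, ← Matrix.mulVec_transpose,
      dotProduct_comm, Matrix.dotProduct_mulVec, ← Matrix.mulVec_transpose]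
  have hcs : u ⬝ᵥ (Cᵀ.mulVec w) ≤ Real.sqrt (∑ i, u i ^ 2) * Real.sqrt (∑ i, (Cᵀ.mulVec w) i ^ 2) :=
    cs u (Cᵀ.mulVec w)
  have hiso := iso k n C hC w
  rw [hiso] at hcs
  have hsq : Real.sqrt (∑ j, w j ^ 2) * Real.sqrt (∑ j, w j ^ 2) = ∑ j, w j ^ 2 :=
    Real.mul_self_sqrt (by positivity)
  have := key ▸ hcs
  nlinarith [Real.sqrt_nonneg (∑ j, w j ^ 2), Real.sqrt_nonneg (∑ i, u i ^ 2), hsq]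

lemma sqrt_add_sqrt_le {p q : ℝ} (hp : 0 ≤ p) (hq : 0 ≤ q) :
    Real.sqrt p + Real.sqrt q ≤ Real.sqrt 2 * Real.sqrt (p + q) := by
  rw [← Real.sqrt_mul (by norm_num)]
  have h1 : Real.sqrt p + Real.sqrt q = Real.sqrt ((Real.sqrt p + Real.sqrt q) ^ 2) :=
    (Real.sqrt_sq (by positivity)).symm
  rw [h1]
  apply Real.sqrt_le_sqrt
  have hpq : Real.sqrt p * Real.sqrt q ≤ (p + q) / 2 := by
    nlinarith [Real.sq_sqrt hp, Real.sq_sqrt hq, sq_nonneg (Real.sqrt p - Real.sqrt q)]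
  nlinarith [Real.sq_sqrt hp, Real.sq_sqrt hq]

/-- the Euclidean distance in the lifted space `ℝⁿ × ℝᵏ` from `(x, z)`
to the circular lifted unsafe set `𝒞 = {(x', z') : ‖C x' − z'‖ ≤ r}` equals
`(1/√2) · (‖C x − z‖ − r)₊`, for a matrix `C` with orthonormal rows. -/
theorem stmt8 (n k : ℕ) (C : Matrix (Fin k) (Fin n) ℝ) (hC : C * Cᵀ = 1)
    (r : ℝ) (hr : 0 < r) (x : Fin n → ℝ) (z : Fin k → ℝ) :
    sInf {t : ℝ | ∃ (x' : Fin n → ℝ) (z' : Fin k → ℝ),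
        Real.sqrt (∑ j, (C.mulVec x' - z') j ^ 2) ≤ r ∧
        t = Real.sqrt ((∑ i, (x i - x' i) ^ 2) + ∑ j, (z j - z' j) ^ 2)}
      = (1 / Real.sqrt 2) *
          max (Real.sqrt (∑ j, (C.mulVec x - z) j ^ 2) - r) 0 := by
  set c := Real.sqrt 2 with hc
  have hc2 : c ^ 2 = 2 := Real.sq_sqrt (by norm_num)
  have hcpos : 0 < c := Real.sqrt_pos.mpr (by norm_num)
  set v : Fin k → ℝ := C.mulVec x - z with hv
  set D := ∑ j, v j ^ 2 with hD
  have hD0 : 0 ≤ D := by positivity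
  set d := Real.sqrt D with hd
  have hd0 : 0 ≤ d := Real.sqrt_nonneg _
  have hd2 : d ^ 2 = D := Real.sq_sqrt hD0
  set S := {t : ℝ | ∃ (x' : Fin n → ℝ) (z' : Fin k → ℝ),
        Real.sqrt (∑ j, (C.mulVec x' - z') j ^ 2) ≤ r ∧
        t = Real.sqrt ((∑ i, (x i - x' i) ^ 2) + ∑ j, (z j - z' j) ^ 2)} with hS
  -- lower bound on every element of S
  have hlow : ∀ t ∈ S, (1 / c) * max (d - r) 0 ≤ t := by
    rintro t ⟨x', z', hfeas, rfl⟩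
    set a : Fin n → ℝ := fun i => x i - x' i with ha
    set b : Fin k → ℝ := fun j => z j - z' j with hb
    have hA0 : (0:ℝ) ≤ ∑ i, a i ^ 2 := by positivity
    have hB0 : (0:ℝ) ≤ ∑ j, b j ^ 2 := by positivity
    have ht0 : 0 ≤ Real.sqrt ((∑ i, a i ^ 2) + ∑ j, b j ^ 2) := Real.sqrt_nonneg _
    -- d ≤ r + √∑a² + √∑b² ≤ r + c * t
    have hsplit : ∀ j, v j = (C.mulVec x' - z') j + ((C.mulVec a) j + (- b) j) := by
      intro j
      simp only [hv, ha, hb, Pi.sub_apply, Pi.neg_apply]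
      have : C.mulVec a j = C.mulVec x j - C.mulVec x' j := by
        have : a = x - x' := by ext i; simp [ha]
        rw [this, Matrix.mulVec_sub]; simp
      rw [this]; ring
    have h1 : d ≤ Real.sqrt (∑ j, (C.mulVec x' - z') j ^ 2)
        + Real.sqrt (∑ j, ((C.mulVec a) j + (- b) j) ^ 2) := by
      rw [hd, hD]
      calc Real.sqrt (∑ j, v j ^ 2)
          = Real.sqrt (∑ j, ((C.mulVec x' - z') j + ((C.mulVec a) j + (- b) j)) ^ 2) := by
            congr 1; exact Finset.sum_congr rfl fun j _ => by rw [hsplit j]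
        _ ≤ _ := nrm_add _ _
    have h2 : Real.sqrt (∑ j, ((C.mulVec a) j + (- b) j) ^ 2)
        ≤ Real.sqrt (∑ j, (C.mulVec a) j ^ 2) + Real.sqrt (∑ j, (- b) j ^ 2) := nrm_add _ _
    have h3 : Real.sqrt (∑ j, (C.mulVec a) j ^ 2) ≤ Real.sqrt (∑ i, a i ^ 2) :=
      contraction k n C hC a
    have h4 : Real.sqrt (∑ j, (- b) j ^ 2) = Real.sqrt (∑ j, b j ^ 2) := by
      congr 1; exact Finset.sum_congr rfl fun j _ => by simp
    have h5 : Real.sqrt (∑ i, a i ^ 2) + Real.sqrt (∑ j, b j ^ 2)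
        ≤ c * Real.sqrt ((∑ i, a i ^ 2) + ∑ j, b j ^ 2) := sqrt_add_sqrt_le hA0 hB0
    have hkey : d ≤ r + c * Real.sqrt ((∑ i, a i ^ 2) + ∑ j, b j ^ 2) := by
      have := h1.trans (by linarith : Real.sqrt (∑ j, (C.mulVec x' - z') j ^ 2)
        + Real.sqrt (∑ j, ((C.mulVec a) j + (- b) j) ^ 2) ≤ r + c * Real.sqrt ((∑ i, a i ^ 2) + ∑ j, b j ^ 2))
      exact this
    rcases max_cases (d - r) 0 with ⟨hm, _⟩ | ⟨hm, _⟩ <;> rw [hm]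
    · rw [div_mul_eq_mul_div, one_mul, div_le_iff₀ hcpos]
      nlinarith
    · simpa using ht0
  -- the infimum value belongs to S
  have hmem : (1 / c) * max (d - r) 0 ∈ S := by
    rcases le_or_gt d r with hdr | hdr
    · have hm : max (d - r) 0 = 0 := max_eq_right (by linarith)
      rw [hm, mul_zero]
      refine ⟨x, z, ?_, ?_⟩
      · rw [← hv, ← hD, ← hd]; exact hdr
      · simp
    · have hdpos : 0 < d := lt_trans hr hdr
      have hDpos : 0 < D := by nlinarith
      have hm : max (d - r) 0 = d - r := max_eq_left (by linarith)
      rw [hm]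
      set s : ℝ := (d - r) / (2 * d) with hs
      have hs0 : 0 ≤ s := div_nonneg (by linarith) (by linarith)
      refine ⟨fun i => x i - s * (Cᵀ.mulVec v) i, fun j => z j + s * v j, ?_, ?_⟩
      · -- feasibility
        have hxv : (fun i => x i - s * (Cᵀ.mulVec v) i) = x - s • (Cᵀ.mulVec v) := by
          ext i; simp
        have hmv : C.mulVec (x - s • (Cᵀ.mulVec v)) = C.mulVec x - s • v := by
          rw [Matrix.mulVec_sub, Matrix.mulVec_smul, Matrix.mulVec_mulVec, hC,
            Matrix.one_mulVec]
        have hval : ∀ j, (C.mulVec (fun i => x i - s * (Cᵀ.mulVec v) i)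
            - fun j => z j + s * v j) j = (r / d) * v j := by
          intro j
          rw [hxv, hmv]
          simp only [Pi.sub_apply, Pi.smul_apply, smul_eq_mul]
          have hvj : v j = C.mulVec x j - z j := by simp [hv]
          have h2s : r / d = 1 - 2 * s := by
            rw [hs]; field_simp; ring
          rw [h2s, hvj]; ring
        have hsum : ∑ j, (C.mulVec (fun i => x i - s * (Cᵀ.mulVec v) i)
            - fun j => z j + s * v j) j ^ 2 = (r / d) ^ 2 * D := by
          rw [hD, Finset.mul_sum]
          exact Finset.sum_congr rfl fun j _ => by rw [hval j]; ring
        rw [hsum]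
        have : (r / d) ^ 2 * D = r ^ 2 := by
          field_simp
          nlinarith [hd2]
        rw [this, Real.sqrt_sq hr.le]
      · -- distance value
        have hsum1 : ∑ i, (x i - (x i - s * (Cᵀ.mulVec v) i)) ^ 2
            = s ^ 2 * ∑ i, (Cᵀ.mulVec v) i ^ 2 := by
          rw [Finset.mul_sum]
          exact Finset.sum_congr rfl fun i _ => by ring
        have hsum2 : ∑ j, (z j - (z j + s * v j)) ^ 2 = s ^ 2 * D := by
          rw [hD, Finset.mul_sum]
          exact Finset.sum_congr rfl fun j _ => by ring
        rw [hsum1, hsum2, iso k n C hC v, ← hD]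
        have hdne : d ≠ 0 := ne_of_gt hdpos
        have hc2' : (1 / c) ^ 2 = 1 / 2 := by rw [div_pow, one_pow, hc2]
        have hsD : s ^ 2 * D = (d - r) ^ 2 / 4 := by
          rw [hs, ← hd2]
          field_simp
          ring
        have heq : s ^ 2 * D + s ^ 2 * D = ((1 / c) * (d - r)) ^ 2 := by
          rw [hsD, mul_pow, hc2']
          ring
        rw [heq, Real.sqrt_sq (mul_nonneg (by positivity) (by linarith))]
  -- conclude
  have hbdd : BddBelow S := ⟨0, fun t ht => by
    obtain ⟨x', z', _, rfl⟩ := ht; exact Real.sqrt_nonneg _⟩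
  exact le_antisymm (csInf_le hbdd hmem) (le_csInf ⟨_, hmem⟩ hlow)
end
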